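/- Let T = [[α, β],[β*, δ]] be a nonnegative bounded operator on X ⊕ U with minimal contraction γ, and let Δ = α^{1/2}(I − γ*γ)α^{1/2} be the Schur complement of T supported by X. Then T admits the factorization T = [[I, α^{1/2}γ*],[0, δ^{1/2}]] · [[Δ, 0],[0, I]] · [[I, 0],[γα^{1/2}, δ^{1/2}]]. -/

import Mathlib

open scoped InnerProductSpace

/-- The 2×2 block operator `[[a, b],[c, d]] : X ⊕ U → X ⊕ Y` between Hilbert space
orthogonal direct sums. -/
noncomputable def blk {X U Y : Type*}
    [NormedAddCommGroup X] [InnerProductSpace ℂ X] [CompleteSpace X]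
    [NormedAddCommGroup U] [InnerProductSpace ℂ U] [CompleteSpace U]
    [NormedAddCommGroup Y] [InnerProductSpace ℂ Y] [CompleteSpace Y]
    (a : X →L[ℂ] X) (b : U →L[ℂ] X) (c : X →L[ℂ] Y) (d : U →L[ℂ] Y) :
    WithLp 2 (X × U) →L[ℂ] WithLp 2 (X × Y) :=
  ((WithLp.prodContinuousLinearEquiv 2 ℂ X Y).symm : (X × Y) →L[ℂ] WithLp 2 (X × Y)).comp
    ((((a.comp (ContinuousLinearMap.fst ℂ X U)) + (b.comp (ContinuousLinearMap.snd ℂ X U))).prod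
      ((c.comp (ContinuousLinearMap.fst ℂ X U)) + (d.comp (ContinuousLinearMap.snd ℂ X U)))).comp
      ((WithLp.prodContinuousLinearEquiv 2 ℂ X U) : WithLp 2 (X × U) →L[ℂ] (X × U)))

lemma blk_comp {X U Y : Type*}
    [NormedAddCommGroup X] [InnerProductSpace ℂ X] [CompleteSpace X]
    [NormedAddCommGroup U] [InnerProductSpace ℂ U] [CompleteSpace U]
    [NormedAddCommGroup Y] [InnerProductSpace ℂ Y] [CompleteSpace Y]
    (a : X →L[ℂ] X) (b : U →L[ℂ] X) (c : X →L[ℂ] Y) (d : U →L[ℂ] Y)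
    (a' : X →L[ℂ] X) (b' : U →L[ℂ] X) (c' : X →L[ℂ] U) (d' : U →L[ℂ] U) :
    (blk a b c d).comp (blk a' b' c' d') =
      blk (a.comp a' + b.comp c') (a.comp b' + b.comp d')
        (c.comp a' + d.comp c') (c.comp b' + d.comp d') := by
  ext x <;> simp [blk, Prod.ext_iff] <;> constructor <;> abel

set_option maxHeartbeats 1000000 in
/-- Let `T = [[α, β],[β*, δ]]` be a nonnegative bounded operator on `X ⊕ U`
with minimal contraction `γ`, and let `Δ = α^{1/2}(I − γ*γ)α^{1/2}` be the Schur complement of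
`T` supported by `X`. Then
`T = [[I, α^{1/2}γ*],[0, δ^{1/2}]] · [[Δ, 0],[0, I]] · [[I, 0],[γα^{1/2}, δ^{1/2}]]`. -/
theorem statement4 {X U : Type*}
    [NormedAddCommGroup X] [InnerProductSpace ℂ X] [CompleteSpace X]
    [NormedAddCommGroup U] [InnerProductSpace ℂ U] [CompleteSpace U]
    (α : X →L[ℂ] X) (β : U →L[ℂ] X) (δ : U →L[ℂ] U)
    (hα : α.IsPositive) (hδ : δ.IsPositive)
    (hT : (blk α β β.adjoint δ).IsPositive)
    (γ : X →L[ℂ] U) (hγnorm : ‖γ‖ ≤ 1)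
    (hγker : LinearMap.ker (α : X →ₗ[ℂ] X) ≤ LinearMap.ker (γ : X →ₗ[ℂ] U))
    (hγran : LinearMap.range (γ : X →ₗ[ℂ] U) ≤ (LinearMap.range (δ : U →ₗ[ℂ] U)).topologicalClosure)
    (hγfac : β.adjoint = (CFC.sqrt δ).comp (γ.comp (CFC.sqrt α))) :
    blk α β β.adjoint δ =
      (blk 1 ((CFC.sqrt α).comp γ.adjoint) 0 (CFC.sqrt δ)).comp
        ((blk ((CFC.sqrt α).comp ((1 - γ.adjoint.comp γ).comp (CFC.sqrt α))) 0 0 1).comp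
          (blk 1 0 (γ.comp (CFC.sqrt α)) (CFC.sqrt δ))) := by
  have hα0 : (0 : X →L[ℂ] X) ≤ α := (ContinuousLinearMap.nonneg_iff_isPositive α).mpr hα
  have hδ0 : (0 : U →L[ℂ] U) ≤ δ := (ContinuousLinearMap.nonneg_iff_isPositive δ).mpr hδ
  have hsa : (CFC.sqrt α).adjoint = CFC.sqrt α :=
    IsSelfAdjoint.adjoint_eq (IsSelfAdjoint.of_nonneg (CFC.sqrt_nonneg (a := α)))
  have hsd : (CFC.sqrt δ).adjoint = CFC.sqrt δ :=
    IsSelfAdjoint.adjoint_eq (IsSelfAdjoint.of_nonneg (CFC.sqrt_nonneg (a := δ)))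
  have ha' : (CFC.sqrt α).comp (CFC.sqrt α) = α := CFC.sqrt_mul_sqrt_self α hα0
  have hd' : (CFC.sqrt δ).comp (CFC.sqrt δ) = δ := CFC.sqrt_mul_sqrt_self δ hδ0
  have hβ : β = ((CFC.sqrt α).comp γ.adjoint).comp (CFC.sqrt δ) := by
    have := congrArg ContinuousLinearMap.adjoint hγfac
    simpa [ContinuousLinearMap.adjoint_comp, hsa, hsd, ContinuousLinearMap.comp_assoc] using this
  rw [blk_comp, blk_comp]
  congr 1
  · ext x
    conv_lhs => rw [← ha']
    simp
  · rw [hβ]; ext x; simp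
  · rw [hγfac]; ext x; simp
  · ext x
    conv_lhs => rw [← hd']
    simp
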